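/- arXiv:1604.07699 — 2 statements merged into one kernel-verified Lean document; each statement's English description precedes it below -/
import Mathlib

section
/- Let u ∈ W^{1,p}_loc(E) satisfy, for all pairs of concentric cubes K_ρ(y) ⊂ K_R(y) ⊂ E, ∫_{K_ρ(y)} |Du|^p dx ≤ (γ/(R-ρ)^p) ∫_{K_R(y)} |u - u_R|^p dx with u_R = ⨍_{K_R(y)} u dx. Then for every q ∈ [Np/(N+p), p], there is a constant C_q = C_q(N,q,γ) such that ⨍_{K_ρ(y)} |Du|^p dx ≤ C_q (R/(R-ρ))^p (R/ρ)^N (⨍_{K_R(y)} |Du|^q dx)^{p/q}, by the Sobolev–Poincaré inequality. -/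
open MeasureTheory Set

/-- The open cube of edge `2ρ` centered at `y` in `ℝ^N`. -/
def cube (N : ℕ) (y : Fin N → ℝ) (ρ : ℝ) : Set (Fin N → ℝ) :=
  {x | ∀ i, |x i - y i| < ρ}

lemma cube_eq_pi (N : ℕ) (y : Fin N → ℝ) (ρ : ℝ) :
    cube N y ρ = Set.pi Set.univ (fun i => Set.Ioo (y i - ρ) (y i + ρ)) := by
  ext x
  simp only [cube, Set.mem_setOf_eq, Set.mem_pi, Set.mem_univ, forall_true_left, Set.mem_Ioo,
    abs_lt]
  constructor <;> intro h i <;> have := h i <;> constructor <;> linarith [this.1, this.2]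

lemma cube_volume (N : ℕ) (y : Fin N → ℝ) (ρ : ℝ) (hρ : 0 < ρ) :
    (volume (cube N y ρ)).toReal = (2 * ρ) ^ N := by
  rw [cube_eq_pi, volume_pi_pi]
  simp only [Real.volume_Ioo]
  have : ∀ i : Fin N, ENNReal.ofReal (y i + ρ - (y i - ρ)) = ENNReal.ofReal (2 * ρ) := by
    intro i; congr 1; ring
  rw [Finset.prod_congr rfl (fun i _ => this i), Finset.prod_const, Finset.card_univ,
    Fintype.card_fin, ENNReal.toReal_pow, ENNReal.toReal_ofReal (by linarith)]


/-- Suppose `u` (with gradient `Du`) satisfies the Caccioppoli-type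
inequality `∫_{K_ρ} |Du|^p ≤ (γ/(R-ρ)^p) ∫_{K_R} |u-u_R|^p` on all concentric cubes
in `E`, and the Sobolev–Poincaré inequality
`⨍_{K_R} |u-u_R|^p ≤ C_{SP}(q) R^p (⨍_{K_R} |Du|^q)^{p/q}` holds for
`q ∈ [Np/(N+p), p]`. Then for each such `q` there is `C_q` with
`⨍_{K_ρ} |Du|^p ≤ C_q (R/(R-ρ))^p (R/ρ)^N (⨍_{K_R} |Du|^q)^{p/q}`. -/
theorem stmt11 (N : ℕ) (E : Set (Fin N → ℝ)) (hE : IsOpen E) (p γ : ℝ)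
    (hp : 1 < p) (hγ : 0 < γ)
    (u : (Fin N → ℝ) → ℝ) (Du : (Fin N → ℝ) → EuclideanSpace ℝ (Fin N))
    (hCacc : ∀ (y : Fin N → ℝ) (ρ R : ℝ), 0 < ρ → ρ < R → cube N y R ⊆ E →
      (∫ x in cube N y ρ, ‖Du x‖ ^ p) ≤
        γ / (R - ρ) ^ p *
          ∫ x in cube N y R, |u x - ⨍ z in cube N y R, u z| ^ p)
    (CSP : ℝ → ℝ) (hCSP : ∀ q, 0 < CSP q)
    (hSP : ∀ q : ℝ, (N : ℝ) * p / ((N : ℝ) + p) ≤ q → q ≤ p →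
      ∀ (y : Fin N → ℝ) (R : ℝ), 0 < R → cube N y R ⊆ E →
        (⨍ x in cube N y R, |u x - ⨍ z in cube N y R, u z| ^ p) ≤
          CSP q * R ^ p * (⨍ x in cube N y R, ‖Du x‖ ^ q) ^ (p / q)) :
    ∀ q : ℝ, (N : ℝ) * p / ((N : ℝ) + p) ≤ q → q ≤ p →
      ∃ Cq : ℝ, 0 < Cq ∧
        ∀ (y : Fin N → ℝ) (ρ R : ℝ), 0 < ρ → ρ < R → cube N y R ⊆ E →
          (⨍ x in cube N y ρ, ‖Du x‖ ^ p) ≤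
            Cq * (R / (R - ρ)) ^ p * (R / ρ) ^ (N : ℝ) *
              (⨍ x in cube N y R, ‖Du x‖ ^ q) ^ (p / q) := by

  intro q hq1 hq2
  refine ⟨γ * CSP q, mul_pos hγ (hCSP q), ?_⟩
  intro y ρ R hρ hρR hsub
  have hR : 0 < R := hρ.trans hρR
  have hRρ : 0 < R - ρ := by linarith
  have hvρ : (volume (cube N y ρ)).toReal = (2 * ρ) ^ N := cube_volume N y ρ hρ
  have hvR : (volume (cube N y R)).toReal = (2 * R) ^ N := cube_volume N y R hR
  set X : ℝ := (⨍ x in cube N y R, ‖Du x‖ ^ q) ^ (p / q) with hXdef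
  have hX : 0 ≤ X := Real.rpow_nonneg (by
    rw [setAverage_eq, smul_eq_mul]
    have : (0:ℝ) ≤ ∫ x in cube N y R, ‖Du x‖ ^ q :=
      integral_nonneg fun x => Real.rpow_nonneg (norm_nonneg _) _
    positivity) _
  set I : ℝ := ∫ x in cube N y R, |u x - ⨍ z in cube N y R, u z| ^ p with hIdef
  set Av : ℝ := ⨍ x in cube N y R, |u x - ⨍ z in cube N y R, u z| ^ p with hAvdef
  have h1 : (∫ x in cube N y ρ, ‖Du x‖ ^ p) ≤ γ / (R - ρ) ^ p * I :=
    hCacc y ρ R hρ hρR hsub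
  have h2 : Av ≤ CSP q * R ^ p * X := hSP q hq1 hq2 y R hR hsub
  have hIAv : I = (2 * R) ^ N * Av := by
    rw [hAvdef, setAverage_eq, measureReal_def, hvR, smul_eq_mul]
    field_simp
    exact hIdef
  have e1 : (⨍ x in cube N y ρ, ‖Du x‖ ^ p) =
      ((2 * ρ) ^ N)⁻¹ * ∫ x in cube N y ρ, ‖Du x‖ ^ p := by
    rw [setAverage_eq, measureReal_def, hvρ, smul_eq_mul]
  have hcρ : (0:ℝ) < (2 * ρ) ^ N := by positivity
  have hrp : (0:ℝ) < (R - ρ) ^ p := Real.rpow_pos_of_pos hRρ p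
  calc (⨍ x in cube N y ρ, ‖Du x‖ ^ p)
      = ((2 * ρ) ^ N)⁻¹ * ∫ x in cube N y ρ, ‖Du x‖ ^ p := e1
    _ ≤ ((2 * ρ) ^ N)⁻¹ * (γ / (R - ρ) ^ p * I) :=
        mul_le_mul_of_nonneg_left h1 (by positivity)
    _ = (γ * (2 * R) ^ N / ((2 * ρ) ^ N * (R - ρ) ^ p)) * Av := by
        rw [hIAv]; field_simp
    _ ≤ (γ * (2 * R) ^ N / ((2 * ρ) ^ N * (R - ρ) ^ p)) * (CSP q * R ^ p * X) :=
        mul_le_mul_of_nonneg_left h2 (by positivity)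
    _ = γ * CSP q * (R / (R - ρ)) ^ p * (R / ρ) ^ (N : ℝ) * X := by
        rw [Real.rpow_natCast, Real.div_rpow hR.le hRρ.le, div_pow, mul_pow, mul_pow]
        have hρN : (0:ℝ) < ρ ^ N := by positivity
        have hRp : (0:ℝ) < R ^ p := Real.rpow_pos_of_pos hR p
        field_simp
end

section
/- Suppose a nonnegative measurable function u on a cube satisfies, for some constants C > 0, ε ∈ (0,1), the decay |[u < 2^{-j²}] ∩ K_ρ| / |K_ρ| ≤ j^{-jε} for all integers j ≥ j*. Then there exist constants C', t* > 0 such that for all 0 < t < t*, |[u < t] ∩ K_ρ| / |K_ρ| ≤ C' / |ln t|^{(ε/2)|ln t|^{1/2}}. -/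
open MeasureTheory Set

set_option maxHeartbeats 1600000 in
/-- If a nonnegative measurable `u` on a cube satisfies
`|[u < 2^{-j²}] ∩ K_ρ|/|K_ρ| ≤ j^{-jε}` for all integers `j ≥ j*`, then there are
`C', t* > 0` such that for `0 < t < t*`,
`|[u < t] ∩ K_ρ|/|K_ρ| ≤ C'/|ln t|^{(ε/2)|ln t|^{1/2}}`. -/
theorem stmt15 (N : ℕ) (y : Fin N → ℝ) (ρ : ℝ) (hρ : 0 < ρ)
    (u : (Fin N → ℝ) → ℝ) (hu : Measurable u)
    (hnonneg : ∀ x ∈ cube N y ρ, 0 ≤ u x)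
    (C ε : ℝ) (hC : 0 < C) (hε : 0 < ε) (hε1 : ε < 1) (jstar : ℕ)
    (hdecay : ∀ j : ℕ, jstar ≤ j →
      (volume ({x | u x < (2 : ℝ) ^ (-((j : ℝ) ^ 2))} ∩ cube N y ρ)).toReal /
          (volume (cube N y ρ)).toReal ≤ (j : ℝ) ^ (-((j : ℝ) * ε))) :
    ∃ C' tstar : ℝ, 0 < C' ∧ 0 < tstar ∧
      ∀ t : ℝ, 0 < t → t < tstar →
        (volume ({x | u x < t} ∩ cube N y ρ)).toReal /
            (volume (cube N y ρ)).toReal ≤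
          C' / |Real.log t| ^ ((ε / 2) * |Real.log t| ^ ((1 : ℝ) / 2)) := by
  -- volume of the cube
  have hcube : cube N y ρ = Set.univ.pi fun i => Set.Ioo (y i - ρ) (y i + ρ) := by
    ext x
    simp only [cube, mem_setOf_eq, mem_pi, mem_univ, true_implies, mem_Ioo]
    refine forall_congr' fun i => ?_
    rw [abs_sub_lt_iff]
    constructor <;> rintro ⟨h1, h2⟩ <;> constructor <;> linarith
  have hvol : volume (cube N y ρ) = ENNReal.ofReal (2 * ρ) ^ N := by
    have h : ∀ i : Fin N, volume (Set.Ioo (y i - ρ) (y i + ρ)) = ENNReal.ofReal (2 * ρ) :=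
      fun i => by rw [Real.volume_Ioo]; congr 1; ring
    rw [hcube, volume_pi_pi]
    simp [h, Finset.prod_const, Finset.card_univ]
  have hfin : volume (cube N y ρ) ≠ ⊤ := by
    rw [hvol]; exact ENNReal.pow_ne_top ENNReal.ofReal_ne_top
  have hne : volume (cube N y ρ) ≠ 0 := by
    rw [hvol]; exact pow_ne_zero _ (ENNReal.ofReal_pos.mpr (by linarith)).ne'
  have hvK : 0 < (volume (cube N y ρ)).toReal := ENNReal.toReal_pos hne hfin
  set M : ℝ := max 36 (((jstar : ℝ) + 1) ^ 2) with hMdef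
  refine ⟨1, Real.exp (-M), one_pos, Real.exp_pos _, fun t ht htt => ?_⟩
  have hM36 : (36 : ℝ) ≤ M := le_max_left _ _
  have hMj : ((jstar : ℝ) + 1) ^ 2 ≤ M := le_max_right _ _
  have hlogt : Real.log t < -M := by
    have h := Real.log_lt_log ht htt
    rwa [Real.log_exp] at h
  set L : ℝ := -Real.log t with hLdef
  have hLM : M < L := by simp only [hLdef]; linarith
  have hL36 : (36 : ℝ) < L := lt_of_le_of_lt hM36 hLM
  have hL0 : (0 : ℝ) < L := by linarith
  have habs : |Real.log t| = L := abs_of_neg (by simp only [hLdef] at hL0 ⊢; linarith)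
  set s : ℝ := Real.sqrt L with hsdef
  have hs0 : (0 : ℝ) ≤ s := Real.sqrt_nonneg L
  have hsL : s ^ 2 = L := Real.sq_sqrt hL0.le
  have hs6 : (6 : ℝ) < s := by nlinarith
  have hsjstar : ((jstar : ℝ) + 1) ≤ s := by
    have h0 : (0 : ℝ) ≤ (jstar : ℝ) + 1 := by positivity
    nlinarith
  set j : ℕ := ⌈s⌉₊ with hjdef
  have hjge : s ≤ (j : ℝ) := Nat.le_ceil s
  have hjlt : (j : ℝ) < s + 1 := Nat.ceil_lt_add_one hs0
  have hjj : jstar ≤ j := by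
    have h : (jstar : ℝ) ≤ (j : ℝ) := by linarith
    exact_mod_cast h
  have hlog2 : Real.log 2 < 0.6931472 := lt_trans Real.log_two_lt_d9 (by norm_num)
  have hlog2' : (0 : ℝ) < Real.log 2 := Real.log_pos one_lt_two
  -- key: j² log 2 ≤ L
  have hkey : (j : ℝ) ^ 2 * Real.log 2 ≤ L := by
    have hj0 : (0 : ℝ) ≤ (j : ℝ) := Nat.cast_nonneg j
    have hj2 : (j : ℝ) ^ 2 ≤ (s + 1) ^ 2 := by nlinarith
    have h1 : (j : ℝ) ^ 2 * Real.log 2 ≤ (s + 1) ^ 2 * Real.log 2 :=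
      mul_le_mul_of_nonneg_right hj2 hlog2'.le
    have h2 : (s + 1) ^ 2 * Real.log 2 ≤ (s + 1) ^ 2 * 0.6931472 :=
      mul_le_mul_of_nonneg_left hlog2.le (sq_nonneg _)
    have h3 : (s + 1) ^ 2 * (0.6931472 : ℝ) ≤ s ^ 2 := by nlinarith [sq_nonneg (s - 6)]
    linarith
  -- subset inclusion
  have hsub : {x | u x < t} ⊆ {x | u x < (2 : ℝ) ^ (-((j : ℝ) ^ 2))} := by
    intro x hx
    have h2 : t ≤ (2 : ℝ) ^ (-((j : ℝ) ^ 2)) := by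
      rw [Real.rpow_def_of_pos two_pos]
      calc t = Real.exp (Real.log t) := (Real.exp_log ht).symm
        _ ≤ Real.exp (Real.log 2 * -((j : ℝ) ^ 2)) := by
            apply Real.exp_le_exp.mpr
            have : Real.log t = -L := by simp [hLdef]
            rw [this]; nlinarith
    exact lt_of_lt_of_le hx h2
  have hmono : (volume ({x | u x < t} ∩ cube N y ρ)).toReal ≤
      (volume ({x | u x < (2 : ℝ) ^ (-((j : ℝ) ^ 2))} ∩ cube N y ρ)).toReal := by
    apply ENNReal.toReal_mono
    · exact ne_top_of_le_ne_top hfin (measure_mono inter_subset_right)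
    · exact measure_mono (inter_subset_inter_left _ hsub)
  have hfinal : (j : ℝ) ^ (-((j : ℝ) * ε)) ≤
      1 / |Real.log t| ^ ((ε / 2) * |Real.log t| ^ ((1 : ℝ) / 2)) := by
    rw [habs, ← Real.sqrt_eq_rpow, ← hsdef]
    rw [Real.rpow_neg (Nat.cast_nonneg j), one_div]
    apply inv_anti₀ (Real.rpow_pos_of_pos hL0 _)
    have hse : (0 : ℝ) ≤ ε * s := mul_nonneg hε.le hs0
    calc L ^ ((ε / 2) * s) = (s ^ 2) ^ ((ε / 2) * s) := by rw [hsL]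
      _ = s ^ (ε * s) := by
          rw [← Real.rpow_natCast s 2, ← Real.rpow_mul hs0]
          congr 1
          push_cast
          ring
      _ ≤ (j : ℝ) ^ (ε * s) := Real.rpow_le_rpow hs0 hjge hse
      _ ≤ (j : ℝ) ^ ((j : ℝ) * ε) := by
          apply Real.rpow_le_rpow_of_exponent_le (by linarith)
          nlinarith
  calc (volume ({x | u x < t} ∩ cube N y ρ)).toReal / (volume (cube N y ρ)).toReal
      ≤ (volume ({x | u x < (2 : ℝ) ^ (-((j : ℝ) ^ 2))} ∩ cube N y ρ)).toReal /
          (volume (cube N y ρ)).toReal := by gcongr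
    _ ≤ (j : ℝ) ^ (-((j : ℝ) * ε)) := hdecay j hjj
    _ ≤ 1 / |Real.log t| ^ ((ε / 2) * |Real.log t| ^ ((1 : ℝ) / 2)) := hfinal
end
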